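/- Let d ≥ 9 be an integer. For every real number λ there exist real numbers p₁ ≤ p₂ ≤ ⋯ ≤ p_d and A satisfying p₁ + ⋯ + p_d = 1 and p₁² + ⋯ + p_d² + A² = 1 together with 2p₁ − λA > 0 and 2(p₁ + ⋯ + p_{d−2}) + λA > 0. (For a 1-form in spacetime dimension D = d + 1 ≥ 10 the critical dilaton coupling is infinite: the system is subcritical for every value of λ.) -/

import Mathlib

lemma sum_filter_lt_fin (d m : ℕ) (hm : m ≤ d) (g : ℕ → ℝ) :
    ∑ i ∈ Finset.univ.filter (fun i : Fin d => (i : ℕ) < m), g (i : ℕ)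
      = ∑ j ∈ Finset.range m, g j := by
  refine Finset.sum_bij (fun a _ => (a : ℕ)) ?_ ?_ ?_ ?_
  · intro a ha
    simp only [Finset.mem_filter] at ha
    exact Finset.mem_range.mpr ha.2
  · intro a ha b hb h
    exact Fin.val_injective h
  · intro b hb
    have hb' := Finset.mem_range.mp hb
    exact ⟨⟨b, lt_of_lt_of_le hb' hm⟩, by simp [hb'], rfl⟩
  · intro a ha; rfl

lemma sum_range_ite (m : ℕ) (hm : 3 ≤ m) (a b : ℝ) :
    ∑ j ∈ Finset.range m, (if j < 3 then a else b) = 3 * a + (m - 3 : ℕ) * b := by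
  rw [Finset.sum_ite]
  have h1 : (Finset.range m).filter (fun j => j < 3) = Finset.range 3 := by
    ext j; simp only [Finset.mem_filter, Finset.mem_range]; omega
  have h2 : ((Finset.range m).filter (fun j => ¬ j < 3)).card = m - 3 := by
    have := Finset.card_filter_add_card_filter_not (s := Finset.range m)
      (p := fun j => j < 3)
    rw [h1] at this
    simp only [Finset.card_range] at this
    omega
  rw [h1, Finset.sum_const, Finset.sum_const, h2]
  simp only [Finset.card_range, nsmul_eq_mul]
  push_cast
  ring

lemma case_small (d : ℕ) (hd : 9 ≤ d) (lam : ℝ) (hl : lam ^ 2 ≤ 2) :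
    ∃ (p : Fin d → ℝ) (A : ℝ),
      Monotone p ∧
      (∑ i, p i) = 1 ∧
      (∑ i, (p i) ^ 2) + A ^ 2 = 1 ∧
      2 * p ⟨0, Nat.lt_of_lt_of_le (by norm_num) hd⟩ - lam * A > 0 ∧
      2 * (∑ i ∈ Finset.univ.filter fun i : Fin d => (i : ℕ) < d - 2, p i)
        + lam * A > 0 := by
  have hd9 : (9:ℝ) ≤ (d:ℝ) := by exact_mod_cast hd
  have hd0 : (0:ℝ) < (d:ℝ) := by linarith
  set s : ℝ := Real.sqrt (1 - 1/d) with hs_def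
  have hs0 : 0 ≤ s := Real.sqrt_nonneg _
  have h1d : (0:ℝ) ≤ 1 - 1/d := by
    rw [sub_nonneg, div_le_one hd0]; linarith
  have hs2 : s ^ 2 = 1 - 1/d := Real.sq_sqrt h1d
  have hs1 : s ≤ 1 := by nlinarith [one_div_pos.mpr hd0]
  refine ⟨fun _ => 1/d, if 0 ≤ lam then -s else s, ?_, ?_, ?_, ?_, ?_⟩
  · exact monotone_const
  · simp [Finset.sum_const, Finset.card_univ]
    field_simp
  · rw [Finset.sum_const, Finset.card_univ, Fintype.card_fin]
    have : (if 0 ≤ lam then -s else s) ^ 2 = s ^ 2 := by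
      split <;> ring
    rw [this, hs2]
    field_simp
    rw [nsmul_eq_mul, one_div, ← mul_assoc, ← sq, mul_inv_cancel₀ (pow_ne_zero 2 hd0.ne')]
    ring
  · have hls : lam * (if 0 ≤ lam then -s else s) ≤ 0 := by
      split <;> rename_i h
      · simp only [mul_neg]
        exact neg_nonpos.mpr (mul_nonneg h hs0)
      · exact mul_nonpos_of_nonpos_of_nonneg (le_of_not_ge h) hs0
    have : (0:ℝ) < 2 * (1/d) := by positivity
    linarith
  · have hsum : ∑ i ∈ Finset.univ.filter (fun i : Fin d => (i : ℕ) < d - 2),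
        (fun _ : Fin d => 1/(d:ℝ)) i = (d - 2 : ℕ) * (1/(d:ℝ)) := by
      rw [sum_filter_lt_fin d (d-2) (by omega) (fun _ => 1/(d:ℝ))]
      rw [Finset.sum_const, Finset.card_range, nsmul_eq_mul]
    rw [hsum]
    have hcast : ((d - 2 : ℕ) : ℝ) = (d:ℝ) - 2 := by
      have : (2:ℕ) ≤ d := by omega
      push_cast [this]
      ring
    rw [hcast]
    have hla : lam * (if 0 ≤ lam then -s else s) = -(|lam| * s) := by
      split <;> rename_i h
      · rw [abs_of_nonneg h]; ring
      · rw [abs_of_neg (lt_of_not_ge h)]; ring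
    rw [hla]
    have habs : |lam| ^ 2 ≤ 2 := by rwa [sq_abs]
    have habs0 : 0 ≤ |lam| := abs_nonneg _
    have key : |lam| * s < 14/9 := by
      nlinarith [sq_nonneg (|lam| - s)]
    have hfrac : 14/9 ≤ 2 * (((d:ℝ) - 2) * (1/d)) := by
      have h9 : 2 * (((d:ℝ) - 2) * (1/d)) - 14/9 = (4*(d:ℝ) - 36) / (9*d) := by
        field_simp
        ring
      have : (0:ℝ) ≤ (4*(d:ℝ) - 36) / (9*d) := by
        apply div_nonneg <;> linarith
      linarith
    linarith

set_option maxHeartbeats 1000000 in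
lemma case_large (d : ℕ) (hd : 9 ≤ d) (lam : ℝ) (hl : 2 ≤ lam ^ 2) :
    ∃ (p : Fin d → ℝ) (A : ℝ),
      Monotone p ∧
      (∑ i, p i) = 1 ∧
      (∑ i, (p i) ^ 2) + A ^ 2 = 1 ∧
      2 * p ⟨0, Nat.lt_of_lt_of_le (by norm_num) hd⟩ - lam * A > 0 ∧
      2 * (∑ i ∈ Finset.univ.filter fun i : Fin d => (i : ℕ) < d - 2, p i)
        + lam * A > 0 := by
  have hd9 : (9:ℝ) ≤ (d:ℝ) := by exact_mod_cast hd
  have hd0 : (0:ℝ) < (d:ℝ) := by linarith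
  have hlam2 : (0:ℝ) < lam ^ 2 := by linarith
  have hlam0 : lam ≠ 0 := by
    intro h; rw [h] at hlam2; simp at hlam2
  set F : ℝ → ℝ := fun x =>
    3 * ((1 - ((d:ℝ) - 3) * x)/3)^2 + ((d:ℝ) - 3) * x^2
      + (((1 - ((d:ℝ) - 3) * x)/3 + 2*x - 1)/lam)^2 - 1 with hF
  have hcont : ContinuousOn F (Set.Icc (1/(d:ℝ)) (4/((d:ℝ)+3))) := by
    apply Continuous.continuousOn
    fun_prop
  have hlohi : 1/(d:ℝ) ≤ 4/((d:ℝ)+3) := by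
    rw [div_le_div_iff₀ hd0 (by linarith)]
    linarith
  have hFlo : F (1/(d:ℝ)) < 0 := by
    have he : F (1/(d:ℝ)) =
        (((d:ℝ)-3)^2 - (d:ℝ)*((d:ℝ)-1)*lam^2) / ((d:ℝ)^2 * lam^2) := by
      rw [hF]
      field_simp
      ring
    rw [he]
    apply div_neg_of_neg_of_pos
    · nlinarith
    · positivity
  have hFhi : 0 < F (4/((d:ℝ)+3)) := by
    have he : F (4/((d:ℝ)+3)) =
        (2*((d:ℝ)-9)*((d:ℝ)-1)*lam^2 + 4*((d:ℝ)-5)^2) / (((d:ℝ)+3)^2 * lam^2) := by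
      rw [hF]
      field_simp
      ring
    rw [he]
    apply div_pos
    · have h1 : 0 ≤ 2*((d:ℝ)-9)*((d:ℝ)-1)*lam^2 :=
        mul_nonneg (mul_nonneg (mul_nonneg (by norm_num)
          (by linarith)) (by linarith)) (le_of_lt hlam2)
      have h2 : (16:ℝ) ≤ ((d:ℝ)-5)^2 := by nlinarith
      linarith
    · positivity
  obtain ⟨b, hbmem, hfb⟩ : ∃ b ∈ Set.Icc (1/(d:ℝ)) (4/((d:ℝ)+3)), F b = 0 := by
    have h0mem : (0:ℝ) ∈ Set.Icc (F (1/(d:ℝ))) (F (4/((d:ℝ)+3))) :=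
      ⟨le_of_lt hFlo, le_of_lt hFhi⟩
    have := intermediate_value_Icc hlohi hcont h0mem
    obtain ⟨b, hb, hfb⟩ := this
    exact ⟨b, hb, hfb⟩
  have hblo : 1/(d:ℝ) ≤ b := hbmem.1
  have hbhi : b < 4/((d:ℝ)+3) := by
    rcases lt_or_eq_of_le hbmem.2 with h | h
    · exact h
    · exfalso; rw [h] at hfb; rw [hfb] at hFhi; exact lt_irrefl 0 hFhi
  set a : ℝ := (1 - ((d:ℝ) - 3) * b)/3 with ha
  set A : ℝ := (a + 2*b - 1)/lam with hA
  have hab : a ≤ b := by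
    rw [ha]
    rw [div_le_iff₀ (by norm_num : (0:ℝ) < 3)]
    have : 1 ≤ (d:ℝ) * b := by
      rw [div_le_iff₀ hd0] at hblo
      linarith [hblo]
    nlinarith
  have hlamA : lam * A = a + 2*b - 1 := by
    rw [hA]; field_simp
  have hw : 0 < 1 + a - 2*b := by
    have : ((d:ℝ)+3) * b < 4 := by
      rw [lt_div_iff₀ (by linarith : (0:ℝ) < (d:ℝ)+3)] at hbhi
      linarith
    rw [ha]; nlinarith
  have hFb : 3 * a^2 + ((d:ℝ) - 3) * b^2 + ((a + 2*b - 1)/lam)^2 = 1 := by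
    rw [hF] at hfb
    simp only at hfb
    rw [ha]
    linarith [hfb]
  have hd3cast : ((d - 3 : ℕ) : ℝ) = (d:ℝ) - 3 := by
    have : (3:ℕ) ≤ d := by omega
    push_cast [this]; ring
  have hd5cast : ((d - 2 - 3 : ℕ) : ℝ) = (d:ℝ) - 5 := by
    have : (5:ℕ) ≤ d := by omega
    have h' : d - 2 - 3 = d - 5 := by omega
    rw [h']
    push_cast [this]; ring
  refine ⟨fun i => if (i:ℕ) < 3 then a else b, A, ?_, ?_, ?_, ?_, ?_⟩
  · intro i j hij
    simp only
    have hij' : (i:ℕ) ≤ (j:ℕ) := hij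
    split_ifs with h1 h2 h2
    · exact le_rfl
    · exact hab
    · omega
    · exact le_rfl
  · rw [Fin.sum_univ_eq_sum_range (fun j => if j < 3 then a else b) d]
    rw [sum_range_ite d (by omega)]
    rw [hd3cast, ha]
    ring
  · have hsq : ∀ i : Fin d, ((if (i:ℕ) < 3 then a else b))^2
        = (if (i:ℕ) < 3 then a^2 else b^2) := by
      intro i; split <;> rfl
    rw [Finset.sum_congr rfl (fun i _ => hsq i)]
    rw [Fin.sum_univ_eq_sum_range (fun j => if j < 3 then a^2 else b^2) d]
    rw [sum_range_ite d (by omega)]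
    rw [hd3cast, hA]
    linarith [hFb]
  · have h0 : ((⟨0, Nat.lt_of_lt_of_le (by norm_num) hd⟩ : Fin d) : ℕ) < 3 := by norm_num
    simp only [h0, if_true]
    rw [hlamA]
    linarith
  · rw [sum_filter_lt_fin d (d-2) (by omega) (fun j => if j < 3 then a else b)]
    rw [sum_range_ite (d-2) (by omega)]
    rw [hd5cast, hlamA]
    have h3a : 3 * a = 1 - ((d:ℝ) - 3) * b := by rw [ha]; ring
    nlinarith [hw]

/-- For a 1-form in spacetime dimension `D = d + 1 ≥ 10` the critical dilaton
coupling is infinite: for every `λ` there are ordered generalized Kasner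
exponents satisfying the Kasner conditions and the strict electric and
magnetic wall inequalities. -/
theorem subcritical_one_form_high_dim (d : ℕ) (hd : 9 ≤ d) (lam : ℝ) :
    ∃ (p : Fin d → ℝ) (A : ℝ),
      Monotone p ∧
      (∑ i, p i) = 1 ∧
      (∑ i, (p i) ^ 2) + A ^ 2 = 1 ∧
      2 * p ⟨0, by omega⟩ - lam * A > 0 ∧
      2 * (∑ i ∈ Finset.univ.filter fun i : Fin d => (i : ℕ) < d - 2, p i)
        + lam * A > 0 := by
  rcases le_total (lam ^ 2) 2 with h | h
  · exact case_small d hd lam h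
  · exact case_large d hd lam h
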